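/- Let S be a nonempty h-admissible set and m := m(S). For all n ≥ h(m), 𝓘_h(S;n) = Σ_{k=h(m)−m}^{h(m)} b_k(S) · C(n − k, h(m) − k), where b_k(S) := #{π ∈ I_h(S, h(m)) : π_{h(m)} = k}. -/

import Mathlib

open Finset

/-- The 1-based `k`-th entry (as a value in `{1,…,n}`) of a permutation of `Fin n`. -/
def entry {n : ℕ} (π : Equiv.Perm (Fin n)) (k : ℕ) : ℕ :=
  if hk : k - 1 < n then ((π ⟨k - 1, hk⟩ : Fin n) : ℕ) + 1 else 0

/-- The set of possible h-inversions `P_h = {(i,j) : 0 < i, i < j ≤ h i}`. -/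
def Ph (h : ℕ → ℕ) : Set (ℕ × ℕ) := {p | 0 < p.1 ∧ p.1 < p.2 ∧ p.2 ≤ h p.1}

/-- The set of h-inversions of a permutation `π ∈ S_n`, as 1-based pairs:
`inv_h(π) = {(i,j) : i < j ≤ min(h i, n), π_i > π_j}`. -/
def invh (h : ℕ → ℕ) {n : ℕ} (π : Equiv.Perm (Fin n)) : Finset (ℕ × ℕ) :=
  ((Finset.univ : Finset (Fin n × Fin n)).filter
      (fun p => (p.1 : ℕ) < (p.2 : ℕ) ∧ (p.2 : ℕ) + 1 ≤ h ((p.1 : ℕ) + 1) ∧ π p.2 < π p.1)).image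
    (fun p => ((p.1 : ℕ) + 1, (p.2 : ℕ) + 1))

/-- `I_h(S,n)`, the set of permutations of `S_n` with h-inversion set `S`. -/
def Ih (h : ℕ → ℕ) (S : Finset (ℕ × ℕ)) (n : ℕ) : Finset (Equiv.Perm (Fin n)) :=
  Finset.univ.filter (fun π => invh h π = S)

/-- `𝓘_h(S;n) = #I_h(S,n)`. -/
def Icount (h : ℕ → ℕ) (S : Finset (ℕ × ℕ)) (n : ℕ) : ℕ := (Ih h S n).card

/-- `S` is h-admissible when it is the h-inversion set of some permutation. -/
def Admissible (h : ℕ → ℕ) (S : Finset (ℕ × ℕ)) : Prop := ∃ n, (Ih h S n).Nonempty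

/-- `j(S)`, the largest index appearing in a pair of `S`. -/
def jS (S : Finset (ℕ × ℕ)) : ℕ := S.sup Prod.snd

/-- `m(S)`, the maximum descent of `S`. -/
def mS (S : Finset (ℕ × ℕ)) : ℕ := (S.filter fun p => p.2 = p.1 + 1).sup Prod.fst

/-- `t(σ) = max{σ_k : 1 ≤ k ≤ j(S), h(k) ≥ j(S)+1}`. -/
def tOf (h : ℕ → ℕ) (S : Finset (ℕ × ℕ)) (σ : Equiv.Perm (Fin (jS S))) : ℕ :=
  ((Finset.Icc 1 (jS S)).filter fun k => jS S + 1 ≤ h k).sup (entry σ)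

/-- `B_k(S,n)`, the permutations in `I_h(S,n)` with entry `k` in position `h(m(S))`. -/
def Bset (h : ℕ → ℕ) (S : Finset (ℕ × ℕ)) (k n : ℕ) : Finset (Equiv.Perm (Fin n)) :=
  (Ih h S n).filter fun π => entry π (h (mS S)) = k

/-- The coefficient `b_k(S) = #B_k(S, h(m(S)))`. -/
def bCoeff (h : ℕ → ℕ) (S : Finset (ℕ × ℕ)) (k : ℕ) : ℕ := (Bset h S k (h (mS S))).card

/-- The coefficient `a_k(S)`. -/
def aCoeff (h : ℕ → ℕ) (S : Finset (ℕ × ℕ)) (k : ℕ) : ℕ :=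
  ((Ih h S (mS S + h (mS S) - 1)).filter fun π =>
    ((Finset.Icc 1 (mS S)).image (entry π)) ∩ Finset.Icc (h (mS S)) (mS S + h (mS S) - 1)
      = Finset.Icc (h (mS S)) (h (mS S) + k - 1)).card

/-- The length (number of inversions) of a permutation. -/
def lenPerm {n : ℕ} (π : Equiv.Perm (Fin n)) : ℕ :=
  ((Finset.univ : Finset (Fin n × Fin n)).filter fun p => p.1 < p.2 ∧ π p.2 < π p.1).card

/-- `ℓ_{[a,b]}(A) = #{(x,y) ∈ [a,b]² : x > y, x ∈ A, y ∉ A}`. -/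
def lenSet (a b : ℕ) (A : Finset ℕ) : ℕ :=
  ((Finset.Icc a b ×ˢ Finset.Icc a b).filter fun q => q.2 < q.1 ∧ q.1 ∈ A ∧ q.2 ∉ A).card


/- ==== auxiliary development for stmt7 ==== -/
namespace Stmt7

open Equiv Fin

/-- insertion of value `v` at the last position -/
def ins {n : ℕ} (π' : Equiv.Perm (Fin n)) (v : Fin (n+1)) : Equiv.Perm (Fin (n+1)) :=
  finSuccEquivLast.trans ((π'.optionCongr).trans (finSuccEquiv' v).symm)

lemma ins_castSucc {n : ℕ} (π' : Equiv.Perm (Fin n)) (v : Fin (n+1)) (i : Fin n) :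
    ins π' v i.castSucc = v.succAbove (π' i) := by
  simp [ins, finSuccEquivLast_castSucc]

lemma ins_last {n : ℕ} (π' : Equiv.Perm (Fin n)) (v : Fin (n+1)) :
    ins π' v (Fin.last n) = v := by
  simp [ins, finSuccEquivLast_last]

/-- deletion of the last position -/
def del {n : ℕ} (π : Equiv.Perm (Fin (n+1))) : Equiv.Perm (Fin n) :=
  Equiv.removeNone (finSuccEquivLast.symm.trans (π.trans (finSuccEquiv' (π (Fin.last n)))))

lemma del_spec {n : ℕ} (π : Equiv.Perm (Fin (n+1))) (i : Fin n) :
    (π (Fin.last n)).succAbove (del π i) = π i.castSucc := by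
  set v := π (Fin.last n) with hv
  set E := finSuccEquivLast.symm.trans (π.trans (finSuccEquiv' v)) with hE
  have hsymm : finSuccEquivLast.symm (some i) = i.castSucc := by
    rw [Equiv.symm_apply_eq, finSuccEquivLast_castSucc]
  have hEi : E (some i) = finSuccEquiv' v (π i.castSucc) := by
    simp [hE, hsymm]
  have hne : π i.castSucc ≠ v := by
    rw [hv]
    intro hcontra
    have := π.injective hcontra
    exact absurd (congrArg Fin.val this) (by simp [Fin.ext_iff]; omega)
  cases hcase : finSuccEquiv' v (π i.castSucc) with
  | none =>
      exfalso
      apply hne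
      have := congrArg (finSuccEquiv' v).symm hcase
      simpa using this
  | some y =>
      have h1 : E (some i) = some y := by rw [hEi, hcase]
      have h2 : some (E.removeNone i) = E (some i) :=
        Equiv.removeNone_some E ⟨y, h1⟩
      have h3 : E.removeNone i = y := by
        rw [h1] at h2; exact (Option.some_injective _ h2.symm).symm
      have h4 : π i.castSucc = v.succAbove y := by
        have := congrArg (finSuccEquiv' v).symm hcase
        simpa using this
      rw [del]
      rw [show Equiv.removeNone (finSuccEquivLast.symm.trans (π.trans (finSuccEquiv' (π (Fin.last n))))) i = E.removeNone i from rfl]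
      rw [h3, h4]

lemma del_ins {n : ℕ} (π' : Equiv.Perm (Fin n)) (v : Fin (n+1)) :
    del (ins π' v) = π' := by
  apply Equiv.ext
  intro i
  apply Fin.succAbove_right_injective (p := v)
  have h1 := del_spec (ins π' v) i
  rw [ins_last] at h1
  rw [h1, ins_castSucc]

lemma ins_del {n : ℕ} (π : Equiv.Perm (Fin (n+1))) :
    ins (del π) (π (Fin.last n)) = π := by
  apply Equiv.ext
  intro x
  induction x using Fin.lastCases with
  | last => rw [ins_last]
  | cast i => rw [ins_castSucc, del_spec]

lemma mem_invh {h : ℕ → ℕ} {n : ℕ} (π : Equiv.Perm (Fin n)) (q : ℕ × ℕ) :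
    q ∈ invh h π ↔ ∃ i j : Fin n, (i:ℕ) < (j:ℕ) ∧ (j:ℕ)+1 ≤ h ((i:ℕ)+1) ∧ π j < π i
      ∧ q.1 = (i:ℕ)+1 ∧ q.2 = (j:ℕ)+1 := by
  constructor
  · intro hq
    simp only [invh, Finset.mem_image, Finset.mem_filter, Finset.mem_univ, true_and] at hq
    obtain ⟨⟨i,j⟩, ⟨h1,h2,h3⟩, h4⟩ := hq
    exact ⟨i, j, h1, h2, h3, by rw [← h4], by rw [← h4]⟩
  · rintro ⟨i,j,h1,h2,h3,h4,h5⟩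
    simp only [invh, Finset.mem_image, Finset.mem_filter, Finset.mem_univ, true_and]
    exact ⟨(i,j), ⟨h1,h2,h3⟩, by rw [Prod.ext_iff]; exact ⟨h4.symm, h5.symm⟩⟩

/-- chain lemmas over ℕ -/
lemma chain_le (f : ℕ → ℕ) (a : ℕ) : ∀ b, a ≤ b →
    (∀ p, a ≤ p → p + 1 ≤ b → f p ≤ f (p+1)) → f a ≤ f b := by
  intro b
  induction b with
  | zero => intro hab _; obtain rfl : a = 0 := Nat.le_zero.mp hab; exact le_rfl
  | succ b ih =>
      intro hab hstep
      rcases Nat.eq_or_lt_of_le hab with rfl | hlt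
      · exact le_rfl
      · have h1 : f a ≤ f b := ih (by omega) (fun p hp hpb => hstep p hp (by omega))
        exact le_trans h1 (hstep b (by omega) le_rfl)

lemma chain_lt (f : ℕ → ℕ) (a : ℕ) : ∀ b, a ≤ b →
    (∀ p, a ≤ p → p + 1 ≤ b → f p < f (p+1)) → f a + (b - a) ≤ f b := by
  intro b
  induction b with
  | zero => intro hab _; obtain rfl : a = 0 := Nat.le_zero.mp hab; simp
  | succ b ih =>
      intro hab hstep
      rcases Nat.eq_or_lt_of_le hab with rfl | hlt
      · simp
      · have h1 : f a + (b - a) ≤ f b := ih (by omega) (fun p hp hpb => hstep p hp (by omega))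
        have h2 : f b < f (b+1) := hstep b (by omega) le_rfl
        omega


section Struct

variable {h : ℕ → ℕ} {S : Finset (ℕ × ℕ)}

lemma mem_Ih {n : ℕ} (π : Equiv.Perm (Fin n)) : π ∈ Ih h S n ↔ invh h π = S := by
  simp [Ih]

lemma descent_le_mS {n : ℕ} {π : Equiv.Perm (Fin n)} (hπ : invh h π = S)
    (hgt : ∀ i : ℕ, 0 < i → i < h i)
    {p : ℕ} (h1 : p < n) (h2 : p + 1 < n) (hd : π ⟨p+1, h2⟩ < π ⟨p, h1⟩) :
    p + 1 ≤ mS S := by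
  have hmem : ((p:ℕ)+1, p+2) ∈ S := by
    rw [← hπ, mem_invh]
    refine ⟨⟨p, h1⟩, ⟨p+1, h2⟩, by simp, ?_, hd, rfl, rfl⟩
    have := hgt (p+1) (by omega)
    simpa using this
  have hmem2 : ((p:ℕ)+1, p+2) ∈ S.filter (fun q => q.2 = q.1 + 1) := by
    simp [Finset.mem_filter, hmem]
  exact Finset.le_sup (f := Prod.fst) hmem2

lemma exists_descent {n : ℕ} (π : Equiv.Perm (Fin n)) (i j : Fin n) (hij : (i:ℕ) < (j:ℕ))
    (hv : π j < π i) :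
    ∃ p, (i:ℕ) ≤ p ∧ p + 1 ≤ (j:ℕ) ∧ ∃ (h1 : p < n) (h2 : p+1 < n),
      π ⟨p+1, h2⟩ < π ⟨p, h1⟩ := by
  by_contra hc
  push_neg at hc
  set g : ℕ → ℕ := fun p => if hp : p < n then ((π ⟨p, hp⟩ : Fin n) : ℕ) else 0 with hg
  have hmono : g i ≤ g j := by
    apply chain_le g i j (le_of_lt hij)
    intro p hp hpj
    have h2 : p + 1 < n := by omega
    have h1 : p < n := by omega
    have := hc p hp hpj h1 h2
    simp only [hg, dif_pos h1, dif_pos h2]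
    exact Fin.le_def.mp this
  have e1 : g i = (π i : ℕ) := by simp [hg, i.isLt]
  have e2 : g j = (π j : ℕ) := by simp [hg, j.isLt]
  rw [e1, e2] at hmono
  exact absurd hmono (by exact Nat.not_le.mpr (Fin.lt_def.mp hv))

lemma witness_invh (hadm : Admissible h S) :
    ∃ (n0 : ℕ) (π0 : Equiv.Perm (Fin n0)), invh h π0 = S := by
  obtain ⟨n0, π0, hπ0⟩ := hadm
  exact ⟨n0, π0, (mem_Ih π0).mp hπ0⟩

lemma mS_pos (hgt : ∀ i : ℕ, 0 < i → i < h i) (hSne : S.Nonempty)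
    (hadm : Admissible h S) : 0 < mS S := by
  obtain ⟨n0, π0, hinv⟩ := witness_invh hadm
  obtain ⟨q, hq⟩ := hSne
  rw [← hinv, mem_invh] at hq
  obtain ⟨i, j, h1, h2, h3, _, _⟩ := hq
  obtain ⟨p, hp1, hp2, hh1, hh2, hd⟩ := exists_descent π0 i j h1 h3
  have := descent_le_mS hinv hgt hh1 hh2 hd
  omega

lemma S_le_H (hmono : ∀ ⦃i j : ℕ⦄, 0 < i → i ≤ j → h i ≤ h j)
    (hgt : ∀ i : ℕ, 0 < i → i < h i) (hadm : Admissible h S) :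
    ∀ q ∈ S, 1 ≤ q.1 ∧ q.1 < q.2 ∧ q.2 ≤ h (mS S) := by
  obtain ⟨n0, π0, hinv⟩ := witness_invh hadm
  intro q hq
  rw [← hinv, mem_invh] at hq
  obtain ⟨i, j, h1, h2, h3, h4, h5⟩ := hq
  obtain ⟨p, hp1, hp2, hh1, hh2, hd⟩ := exists_descent π0 i j h1 h3
  have hdm : p + 1 ≤ mS S := descent_le_mS hinv hgt hh1 hh2 hd
  refine ⟨by omega, by omega, ?_⟩
  have e1 : h ((i:ℕ)+1) ≤ h (p+1) := hmono (by omega) (by omega)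
  have e2 : h (p+1) ≤ h (mS S) := hmono (by omega) hdm
  omega

lemma no_descent_ge_mS {n : ℕ} {π : Equiv.Perm (Fin n)} (hπ : invh h π = S)
    (hgt : ∀ i : ℕ, 0 < i → i < h i)
    {p : ℕ} (hp : mS S ≤ p) (h2 : p + 1 < n) :
    (π ⟨p, by omega⟩ : ℕ) < π ⟨p+1, h2⟩ := by
  have h1 : p < n := by omega
  have hne : π ⟨p, h1⟩ ≠ π ⟨p+1, h2⟩ := by
    intro hcontra
    have := π.injective hcontra
    simp [Fin.ext_iff] at this
  rcases Nat.lt_or_ge (π ⟨p, h1⟩ : ℕ) (π ⟨p+1, h2⟩ : ℕ) with hlt | hge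
  · exact hlt
  · exfalso
    have hd : π ⟨p+1, h2⟩ < π ⟨p, h1⟩ := by
      rw [Fin.lt_def]
      rcases Nat.lt_or_ge (π ⟨p+1, h2⟩ : ℕ) (π ⟨p, h1⟩ : ℕ) with a | b
      · exact a
      · exact absurd (Fin.ext (by omega)) hne
    have := descent_le_mS hπ hgt h1 h2 hd
    omega

lemma tail_mono {n : ℕ} {π : Equiv.Perm (Fin n)} (hπ : invh h π = S)
    (hgt : ∀ i : ℕ, 0 < i → i < h i)
    {a b : ℕ} (ha : mS S ≤ a) (hab : a ≤ b) (hb : b < n) :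
    (π ⟨a, by omega⟩ : ℕ) + (b - a) ≤ (π ⟨b, hb⟩ : ℕ) := by
  set g : ℕ → ℕ := fun p => if hp : p < n then ((π ⟨p, hp⟩ : Fin n) : ℕ) else 0 with hg
  have hchain : g a + (b - a) ≤ g b := by
    apply chain_lt g a b hab
    intro p hp hpb
    have h2 : p + 1 < n := by omega
    have h1 : p < n := by omega
    have := no_descent_ge_mS hπ hgt (by omega : mS S ≤ p) h2
    simp only [hg, dif_pos h1, dif_pos h2]
    exact this
  have e1 : g a = (π ⟨a, by omega⟩ : ℕ) := by simp [hg, show a < n by omega]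
  have e2 : g b = (π ⟨b, hb⟩ : ℕ) := by simp [hg, hb]
  omega

lemma entry_succ {n : ℕ} (π : Equiv.Perm (Fin (n+1))) :
    entry π (n+1) = (π (Fin.last n) : ℕ) + 1 := by
  simp [entry, Fin.last]

end Struct


section Rec

variable {h : ℕ → ℕ} {S : Finset (ℕ × ℕ)}

set_option maxHeartbeats 1000000 in
lemma rec_card (hmono : ∀ ⦃i j : ℕ⦄, 0 < i → i ≤ j → h i ≤ h j)
    (hgt : ∀ i : ℕ, 0 < i → i < h i) (hSne : S.Nonempty) (hadm : Admissible h S)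
    {N : ℕ} (hN : h (mS S) ≤ N + 1) {v : ℕ} (hv1 : 1 ≤ v) (hv2 : v ≤ N + 2) :
    ((Ih h S (N+2)).filter (fun π => entry π (N+2) = v)).card
      = ((Ih h S (N+1)).filter (fun π' => entry π' (N+1) < v)).card := by
  have hm : 0 < mS S := mS_pos hgt hSne hadm
  have hmH : mS S < h (mS S) := hgt _ hm
  have hSH := S_le_H hmono hgt hadm
  have hmN : mS S ≤ N := by omega
  set v' : Fin (N+2) := ⟨v-1, by omega⟩ with hv'
  refine Finset.card_bij' (fun π _ => del π) (fun π' _ => ins π' v') ?_ ?_ ?_ ?_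
  · -- forward membership
    intro π hπ
    simp only [Finset.mem_filter, mem_Ih] at hπ ⊢
    obtain ⟨hπS, hlast⟩ := hπ
    rw [entry_succ] at hlast
    have htail : (π ⟨N, by omega⟩ : ℕ) < (π ⟨N+1, by omega⟩ : ℕ) :=
      no_descent_ge_mS hπS hgt hmN (by omega)
    constructor
    · ext q
      constructor
      · intro hq
        rw [mem_invh] at hq
        obtain ⟨i', j', h1, h2, h3, h4, h5⟩ := hq
        rw [← hπS, mem_invh]
        refine ⟨i'.castSucc, j'.castSucc, by simpa using h1, by simpa using h2, ?_,
          by simpa using h4, by simpa using h5⟩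
        rw [← del_spec π i', ← del_spec π j']
        exact Fin.succAbove_lt_succAbove_iff.mpr h3
      · intro hq
        have hq2 := (hSH q hq).2.2
        rw [← hπS, mem_invh] at hq
        obtain ⟨i, j, h1, h2, h3, h4, h5⟩ := hq
        have hjN : (j:ℕ) < N+1 := by omega
        have hiN : (i:ℕ) < N+1 := by omega
        have ei : (⟨(i:ℕ), hiN⟩ : Fin (N+1)).castSucc = i := by simp [Fin.ext_iff]
        have ej : (⟨(j:ℕ), hjN⟩ : Fin (N+1)).castSucc = j := by simp [Fin.ext_iff]
        rw [mem_invh]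
        refine ⟨⟨(i:ℕ), hiN⟩, ⟨(j:ℕ), hjN⟩, h1, h2, ?_, h4, h5⟩
        rw [← Fin.succAbove_lt_succAbove_iff (p := π (Fin.last (N+1))), del_spec, del_spec,
          ei, ej]
        exact h3
    · rw [entry_succ]
      have hkey := del_spec π (Fin.last N)
      have hlt : (π (Fin.last (N+1))).succAbove (del π (Fin.last N)) < π (Fin.last (N+1)) := by
        rw [hkey]
        rw [Fin.lt_def]
        exact htail
      rw [Fin.succAbove_lt_iff_castSucc_lt] at hlt
      have hv2' := Fin.lt_def.mp hlt
      simp only [Fin.coe_castSucc] at hv2'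
      omega
  · -- backward membership
    intro π' hπ'
    simp only [Finset.mem_filter, mem_Ih] at hπ' ⊢
    obtain ⟨hπ'S, hlt⟩ := hπ'
    rw [entry_succ] at hlt
    constructor
    · ext q
      constructor
      · intro hq
        rw [mem_invh] at hq
        obtain ⟨i, j, h1, h2, h3, h4, h5⟩ := hq
        rcases Nat.lt_or_ge (j:ℕ) (N+1) with hjN | hjN
        · have hiN : (i:ℕ) < N+1 := by omega
          have ei : (⟨(i:ℕ), hiN⟩ : Fin (N+1)).castSucc = i := by simp [Fin.ext_iff]
          have ej : (⟨(j:ℕ), hjN⟩ : Fin (N+1)).castSucc = j := by simp [Fin.ext_iff]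
          rw [← ei, ← ej, ins_castSucc, ins_castSucc] at h3
          rw [← hπ'S, mem_invh]
          exact ⟨⟨(i:ℕ), hiN⟩, ⟨(j:ℕ), hjN⟩, h1, h2,
            Fin.succAbove_lt_succAbove_iff.mp h3, h4, h5⟩
        · exfalso
          have hjval : (j:ℕ) = N+1 := by have := j.isLt; omega
          have hj : j = Fin.last (N+1) := Fin.ext (by rw [hjval, Fin.val_last])
          have hiN : (i:ℕ) < N+1 := by omega
          have ei : (⟨(i:ℕ), hiN⟩ : Fin (N+1)).castSucc = i := by simp [Fin.ext_iff]
          have hwin : N + 2 ≤ h ((i:ℕ)+1) := by omega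
          have him : mS S ≤ (i:ℕ) := by
            by_contra hcon
            push_neg at hcon
            have := hmono (show 0 < (i:ℕ)+1 by omega) (show (i:ℕ)+1 ≤ mS S by omega)
            omega
          have hvtail : (π' ⟨(i:ℕ), by omega⟩ : ℕ) + (N - (i:ℕ)) ≤ (π' ⟨N, by omega⟩ : ℕ) :=
            tail_mono hπ'S hgt him (by omega) (by omega)
          have hl : (π' ⟨N, by omega⟩ : ℕ) = (π' (Fin.last N) : ℕ) := rfl
          rw [hj, ins_last, ← ei, ins_castSucc] at h3
          rw [Fin.lt_succAbove_iff_le_castSucc] at h3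
          have hle := Fin.le_def.mp h3
          simp only [Fin.coe_castSucc] at hle
          have hvv : (v' : ℕ) = v - 1 := rfl
          have hpi : (π' (⟨(i:ℕ), hiN⟩ : Fin (N+1)) : ℕ) = (π' ⟨(i:ℕ), by omega⟩ : ℕ) := rfl
          omega
      · intro hq
        have hq2 := (hSH q hq).2.2
        rw [← hπ'S, mem_invh] at hq
        obtain ⟨i', j', h1, h2, h3, h4, h5⟩ := hq
        rw [mem_invh]
        refine ⟨i'.castSucc, j'.castSucc, by simpa using h1, by simpa using h2, ?_,
          by simpa using h4, by simpa using h5⟩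
        rw [ins_castSucc, ins_castSucc]
        exact Fin.succAbove_lt_succAbove_iff.mpr h3
    · rw [entry_succ, ins_last]
      have hvv : (v' : ℕ) = v - 1 := rfl
      omega
  · -- left inverse
    intro π hπ
    simp only [Finset.mem_filter, mem_Ih] at hπ
    obtain ⟨hπS, hlast⟩ := hπ
    rw [entry_succ] at hlast
    have hlv : π (Fin.last (N+1)) = v' := Fin.ext (by
      have hvv : (v' : ℕ) = v - 1 := rfl
      omega)
    show ins (del π) v' = π
    rw [← hlv]
    exact ins_del π
  · intro π' _
    show del (ins π' v') = π'
    exact del_ins π' v'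

end Rec


section Count

variable {h : ℕ → ℕ} {S : Finset (ℕ × ℕ)}

/-- number of permutations in `I_h(S,n)` with last entry `v` -/
def Dcount (h : ℕ → ℕ) (S : Finset (ℕ × ℕ)) (n v : ℕ) : ℕ :=
  ((Ih h S n).filter (fun π => entry π n = v)).card

lemma Icount_eq_sum (n : ℕ) : Icount h S (n+1) = ∑ w ∈ Icc 1 (n+1), Dcount h S (n+1) w := by
  show (Ih h S (n+1)).card = _
  simp only [Dcount]
  apply Finset.card_eq_sum_card_fiberwise
  intro π _
  simp only [Finset.mem_coe, Finset.mem_Icc, entry_succ]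
  have := (π (Fin.last n)).isLt
  omega

lemma card_filter_lt (n v : ℕ) :
    ((Ih h S (n+1)).filter (fun π => entry π (n+1) < v)).card
      = ∑ w ∈ Icc 1 (v-1), Dcount h S (n+1) w := by
  rw [Finset.card_eq_sum_card_fiberwise (f := fun π => entry π (n+1)) (t := Icc 1 (v-1))
    (fun π hπ => by
      rw [Finset.mem_coe, Finset.mem_filter] at hπ
      have h2 := hπ.2
      rw [entry_succ] at h2
      rw [Finset.mem_coe, Finset.mem_Icc]
      show 1 ≤ entry π (n+1) ∧ entry π (n+1) ≤ v - 1
      rw [entry_succ]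
      omega)]
  apply Finset.sum_congr rfl
  intro w hw
  rw [Finset.mem_Icc] at hw
  rw [Finset.filter_filter]
  show _ = ((Ih h S (n+1)).filter (fun π => entry π (n+1) = w)).card
  congr 1
  apply Finset.filter_congr
  intro π _
  constructor
  · exact fun hx => hx.2
  · intro hx
    exact ⟨by omega, hx⟩

lemma Dcount_rec (hmono : ∀ ⦃i j : ℕ⦄, 0 < i → i ≤ j → h i ≤ h j)
    (hgt : ∀ i : ℕ, 0 < i → i < h i) (hSne : S.Nonempty) (hadm : Admissible h S)
    {n : ℕ} (hn : h (mS S) ≤ n) {v : ℕ} (hv1 : 1 ≤ v) (hv2 : v ≤ n + 1) :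
    Dcount h S (n+1) v = ∑ w ∈ Icc 1 (v-1), Dcount h S n w := by
  have hm := mS_pos hgt hSne hadm
  have hH : 1 ≤ h (mS S) := by have := hgt _ hm; omega
  obtain ⟨N, rfl⟩ : ∃ N, n = N + 1 := ⟨n - 1, by omega⟩
  show ((Ih h S (N+2)).filter (fun π => entry π (N+2) = v)).card = _
  rw [rec_card hmono hgt hSne hadm hn hv1 hv2]
  exact card_filter_lt N v

lemma Dcount_supp (hmono : ∀ ⦃i j : ℕ⦄, 0 < i → i ≤ j → h i ≤ h j)
    (hgt : ∀ i : ℕ, 0 < i → i < h i) (hSne : S.Nonempty) (hadm : Admissible h S)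
    {w : ℕ} (hw : Dcount h S (h (mS S)) w ≠ 0) :
    h (mS S) - mS S ≤ w ∧ w ≤ h (mS S) := by
  have hm := mS_pos hgt hSne hadm
  have hmH := hgt _ hm
  obtain ⟨N, hN⟩ : ∃ N, h (mS S) = N + 1 := ⟨h (mS S) - 1, by omega⟩
  rw [hN] at hw
  obtain ⟨π, hπ⟩ := Finset.card_ne_zero.mp hw
  rw [Finset.mem_filter, mem_Ih] at hπ
  obtain ⟨hπS, hent⟩ := hπ
  rw [entry_succ] at hent
  have hlastlt := (π (Fin.last N)).isLt
  have hmono2 : (π ⟨mS S, by omega⟩ : ℕ) + (N - mS S) ≤ (π ⟨N, by omega⟩ : ℕ) :=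
    tail_mono hπS hgt le_rfl (by omega) (by omega)
  have hl : (π ⟨N, by omega⟩ : ℕ) = (π (Fin.last N) : ℕ) := rfl
  omega

lemma hockey (k r : ℕ) : ∀ v : ℕ,
    (∑ w ∈ Icc 1 v, if k ≤ w - 1 then Nat.choose (w-1-k) r else 0)
      = if k ≤ v then Nat.choose (v-k) (r+1) else 0 := by
  intro v
  induction v with
  | zero =>
      rw [Finset.Icc_eq_empty (by omega), Finset.sum_empty]
      by_cases hk : k ≤ 0
      · rw [if_pos hk]
        have : 0 - k = 0 := by omega
        rw [this, Nat.choose_zero_succ]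
      · rw [if_neg hk]
  | succ v ih =>
      rw [Finset.sum_Icc_succ_top (by omega : 1 ≤ v + 1), ih]
      have e1 : (v + 1) - 1 = v := rfl
      rw [e1]
      by_cases h1 : k ≤ v
      · rw [if_pos h1, if_pos h1, if_pos (by omega : k ≤ v + 1)]
        have e2 : v + 1 - k = (v - k) + 1 := by omega
        rw [e2, Nat.choose_succ_succ]
        simp only [Nat.succ_eq_add_one]
        omega
      · rw [if_neg h1, if_neg h1]
        by_cases h2 : k ≤ v + 1
        · rw [if_pos h2]
          have e3 : v + 1 - k = 0 := by omega
          rw [e3, Nat.choose_zero_succ]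
        · rw [if_neg h2]

lemma main_sum (hmono : ∀ ⦃i j : ℕ⦄, 0 < i → i ≤ j → h i ≤ h j)
    (hgt : ∀ i : ℕ, 0 < i → i < h i) (hSne : S.Nonempty) (hadm : Admissible h S) :
    ∀ r v : ℕ, v ≤ h (mS S) + r →
    (∑ w ∈ Icc 1 v, Dcount h S (h (mS S) + r) w)
      = ∑ k ∈ Icc (h (mS S) - mS S) (h (mS S)),
          bCoeff h S k * (if k ≤ v then Nat.choose (v-k) r else 0) := by
  have hm := mS_pos hgt hSne hadm
  have hmH := hgt _ hm
  intro r
  induction r with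
  | zero =>
      intro v hv
      rw [Nat.add_zero]
      have hsupp : ∀ x ∈ Icc 1 v, Dcount h S (h (mS S)) x ≠ 0 →
          (h (mS S) - mS S ≤ x ∧ x ≤ h (mS S)) :=
        fun x _ hne => Dcount_supp hmono hgt hSne hadm hne
      rw [← Finset.sum_filter_of_ne hsupp]
      have hset : (Icc 1 v).filter (fun w => h (mS S) - mS S ≤ w ∧ w ≤ h (mS S))
          = (Icc (h (mS S) - mS S) (h (mS S))).filter (fun k => k ≤ v) := by
        ext x
        simp only [Finset.mem_filter, Finset.mem_Icc]
        omega
      rw [hset, Finset.sum_filter]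
      apply Finset.sum_congr rfl
      intro k _
      by_cases hkv : k ≤ v
      · rw [if_pos hkv, if_pos hkv, Nat.choose_zero_right, Nat.mul_one]
        rfl
      · rw [if_neg hkv, if_neg hkv, Nat.mul_zero]
  | succ r ih =>
      intro v hv
      have hrec : ∀ w ∈ Icc 1 v, Dcount h S (h (mS S) + (r+1)) w
          = ∑ u ∈ Icc 1 (w-1), Dcount h S (h (mS S) + r) u := by
        intro w hw
        rw [Finset.mem_Icc] at hw
        have e : h (mS S) + (r + 1) = (h (mS S) + r) + 1 := by omega
        rw [e]
        exact Dcount_rec hmono hgt hSne hadm (by omega) hw.1 (by omega)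
      rw [Finset.sum_congr rfl hrec]
      have happ : ∀ w ∈ Icc 1 v, (∑ u ∈ Icc 1 (w-1), Dcount h S (h (mS S) + r) u)
          = ∑ k ∈ Icc (h (mS S) - mS S) (h (mS S)),
              bCoeff h S k * (if k ≤ w - 1 then Nat.choose (w-1-k) r else 0) := by
        intro w hw
        rw [Finset.mem_Icc] at hw
        exact ih (w-1) (by omega)
      rw [Finset.sum_congr rfl happ, Finset.sum_comm]
      apply Finset.sum_congr rfl
      intro k _
      rw [← Finset.mul_sum]
      congr 1
      rw [hockey k r v]

end Count

end Stmt7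

/-- For `n ≥ h(m)`, `𝓘_h(S;n) = Σ_{k=h(m)−m}^{h(m)} b_k(S) · C(n−k, h(m)−k)`. -/
theorem stmt7 (h : ℕ → ℕ) (hmono : ∀ ⦃i j : ℕ⦄, 0 < i → i ≤ j → h i ≤ h j)
    (hgt : ∀ i : ℕ, 0 < i → i < h i) (S : Finset (ℕ × ℕ)) (hSne : S.Nonempty)
    (hadm : Admissible h S) (n : ℕ) (hn : h (mS S) ≤ n) :
    Icount h S n =
      ∑ k ∈ Finset.Icc (h (mS S) - mS S) (h (mS S)),
        bCoeff h S k * Nat.choose (n - k) (h (mS S) - k) := by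
  have hm := Stmt7.mS_pos hgt hSne hadm
  have hmH := hgt _ hm
  obtain ⟨r, hr⟩ : ∃ r, n = h (mS S) + r := ⟨n - h (mS S), by omega⟩
  subst hr
  obtain ⟨M, hM⟩ : ∃ M, h (mS S) + r = M + 1 := ⟨h (mS S) + r - 1, by omega⟩
  have e0 : Icount h S (h (mS S) + r)
      = ∑ w ∈ Finset.Icc 1 (h (mS S) + r), Stmt7.Dcount h S (h (mS S) + r) w := by
    rw [hM]
    exact Stmt7.Icount_eq_sum M
  rw [e0, Stmt7.main_sum hmono hgt hSne hadm r (h (mS S) + r) le_rfl]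
  apply Finset.sum_congr rfl
  intro k hk
  rw [Finset.mem_Icc] at hk
  rw [if_pos (by omega : k ≤ h (mS S) + r)]
  congr 1
  have e : h (mS S) + r - k = (h (mS S) - k) + r := by omega
  rw [e]
  exact (Nat.choose_symm_add).symm
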